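/- For every γ > 0, the map z ↦ u*_γ(z) is Lipschitz continuous on ℝⁿ with constant 1/γ, and φ*_γ is differentiable on ℝⁿ with gradient ∇φ*_γ(z) = u*_γ(z); consequently ∇φ*_γ is Lipschitz continuous with constant 1/γ. -/

import Mathlib

open scoped RealInnerProductSpace BigOperators

set_option maxHeartbeats 1000000 in
theorem stmt_1
    {n : ℕ} (hn : 1 ≤ n)
    (U : Set (EuclideanSpace ℝ (Fin n)))
    (hUne : U.Nonempty) (hUcl : IsClosed U) (hUcx : Convex ℝ U)
    (φ : EuclideanSpace ℝ (Fin n) → EReal)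
    (hφbot : ∀ v, φ v ≠ ⊥)
    (hφlsc : LowerSemicontinuous φ)
    (hφcx : ∀ v w : EuclideanSpace ℝ (Fin n), ∀ a c : ℝ, 0 ≤ a → 0 ≤ c → a + c = 1 →
      φ (a • v + c • w) ≤ (a : EReal) * φ v + (c : EReal) * φ w)
    (hφdom : ∃ v ∈ U, φ v ≠ ⊤)
    (b : EuclideanSpace ℝ (Fin n) → ℝ)
    (hbcont : Continuous b)
    (hbsc : StrongConvexOn U 1 b)
    (ustar : ℝ → EuclideanSpace ℝ (Fin n) → EuclideanSpace ℝ (Fin n))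
    (humem : ∀ γ > (0:ℝ), ∀ z, ustar γ z ∈ U)
    (hufin : ∀ γ > (0:ℝ), ∀ z, φ (ustar γ z) ≠ ⊤)
    (humax : ∀ γ > (0:ℝ), ∀ z, ∀ v ∈ U,
      (⟪z, v⟫ : EReal) - φ v - ((γ * b v : ℝ) : EReal)
        ≤ (⟪z, ustar γ z⟫ : EReal) - φ (ustar γ z) - ((γ * b (ustar γ z) : ℝ) : EReal))
    (φs : ℝ → EuclideanSpace ℝ (Fin n) → ℝ)
    (hφs : ∀ γ z, φs γ z = ⟪z, ustar γ z⟫ - (φ (ustar γ z)).toReal - γ * b (ustar γ z))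
    :
    ∀ γ > (0:ℝ),
      LipschitzWith (Real.toNNReal (1/γ)) (ustar γ) ∧
      (∀ z, HasGradientAt (φs γ) (ustar γ z) z) ∧
      LipschitzWith (Real.toNNReal (1/γ)) (fun z => ustar γ z) := by
  intro γ hγ
  set G : EuclideanSpace ℝ (Fin n) → EuclideanSpace ℝ (Fin n) → ℝ :=
    fun z u => ⟪z, u⟫ - (φ u).toReal - γ * b u with hG
  -- real version of the maximality
  have hmaxR : ∀ z, ∀ v ∈ U, φ v ≠ ⊤ → G z v ≤ G z (ustar γ z) := by
    intro z v hv hvtop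
    have h := humax γ hγ z v hv
    rw [← EReal.coe_toReal hvtop (hφbot v),
        ← EReal.coe_toReal (hufin γ hγ z) (hφbot (ustar γ z))] at h
    rw [← EReal.coe_sub, ← EReal.coe_sub, ← EReal.coe_sub, ← EReal.coe_sub] at h
    exact_mod_cast h
  -- strong concavity decay at the maximizer
  have hkey : ∀ z, ∀ v ∈ U, φ v ≠ ⊤ →
      G z v + γ / 2 * ‖v - ustar γ z‖ ^ 2 ≤ G z (ustar γ z) := by
    intro z v hv hvtop
    set u := ustar γ z with hu
    have hum : u ∈ U := humem γ hγ z
    have hut : φ u ≠ ⊤ := hufin γ hγ z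
    set C : ℝ := ‖v - u‖ ^ 2 with hC
    have hC0 : 0 ≤ C := by positivity
    have hstep : ∀ t : ℝ, t ∈ Set.Ioc (0:ℝ) 1 →
        G z v + γ / 2 * C ≤ G z u + γ / 2 * C * t := by
      intro t ht
      obtain ⟨ht0, ht1⟩ := ht
      have ha : (0:ℝ) ≤ 1 - t := by linarith
      have hc : (0:ℝ) ≤ t := le_of_lt ht0
      have hac : (1 - t) + t = 1 := by ring
      set w : EuclideanSpace ℝ (Fin n) := (1 - t) • u + t • v with hw
      have hwU : w ∈ U := hUcx hum hv ha hc hac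
      -- φ convexity in EReal
      have hφw : φ w ≤ (((1 - t) * (φ u).toReal + t * (φ v).toReal : ℝ) : EReal) := by
        have h := hφcx u v (1 - t) t ha hc hac
        rw [← EReal.coe_toReal hut (hφbot u), ← EReal.coe_toReal hvtop (hφbot v)] at h
        calc φ w ≤ ((1 - t : ℝ) : EReal) * (((φ u).toReal : ℝ) : EReal)
              + ((t : ℝ) : EReal) * (((φ v).toReal : ℝ) : EReal) := h
          _ = (((1 - t) * (φ u).toReal + t * (φ v).toReal : ℝ) : EReal) := by
              rw [← EReal.coe_mul, ← EReal.coe_mul, ← EReal.coe_add]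
      have hφwtop : φ w ≠ ⊤ := ne_top_of_le_ne_top (EReal.coe_ne_top _) hφw
      have hφwR : (φ w).toReal ≤ (1 - t) * (φ u).toReal + t * (φ v).toReal := by
        have := EReal.toReal_le_toReal hφw (hφbot w) (EReal.coe_ne_top _)
        rwa [EReal.toReal_coe] at this
      -- b strong convexity
      have hbw : b w ≤ (1 - t) * b u + t * b v - (1 - t) * t * (1 / 2 * ‖u - v‖ ^ 2) := by
        have := hbsc.2 hum hv ha hc hac
        simpa using this
      -- inner linearity
      have hiw : ⟪z, w⟫ = (1 - t) * ⟪z, u⟫ + t * ⟪z, v⟫ := by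
        rw [hw, inner_add_right, inner_smul_right, inner_smul_right]
      have hmax := hmaxR z w hwU hφwtop
      have hnv : ‖u - v‖ ^ 2 = C := by rw [hC, norm_sub_rev]
      rw [norm_sub_rev u v, ← hC] at hbw
      rw [hG] at hmax ⊢
      simp only at hmax ⊢
      rw [hiw, ← hu] at hmax
      have hbwγ := mul_le_mul_of_nonneg_left hbw hγ.le
      have hdiv : t * (⟪z, v⟫ - (φ v).toReal - γ * b v) + γ * ((1 - t) * t * (C / 2))
          ≤ t * (⟪z, u⟫ - (φ u).toReal - γ * b u) := by nlinarith [hmax, hφwR, hbwγ]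
      nlinarith [hdiv, ht0]
    -- take the limit t → 0⁺
    have hlim : Filter.Tendsto (fun t : ℝ => G z u + γ / 2 * C * t)
        (nhdsWithin 0 (Set.Ioi 0)) (nhds (G z u)) := by
      have h0 : Filter.Tendsto (fun t : ℝ => G z u + γ / 2 * C * t) (nhds 0)
          (nhds (G z u + γ / 2 * C * 0)) := by
        exact (tendsto_const_nhds.add ((tendsto_const_nhds.mul Filter.tendsto_id)))
      simpa using h0.mono_left nhdsWithin_le_nhds
    refine ge_of_tendsto hlim ?_
    filter_upwards [Ioc_mem_nhdsGT_of_mem (Set.left_mem_Ico.mpr one_pos)] with t ht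
    exact hstep t ht
  -- Lipschitz estimate
  have hlipR : ∀ z1 z2, ‖ustar γ z1 - ustar γ z2‖ ≤ 1 / γ * ‖z1 - z2‖ := by
    intro z1 z2
    set u1 := ustar γ z1 with hu1e
    set u2 := ustar γ z2 with hu2e
    have h1 := hkey z1 u2 (humem γ hγ z2) (hufin γ hγ z2)
    have h2 := hkey z2 u1 (humem γ hγ z1) (hufin γ hγ z1)
    rw [← hu1e] at h1
    rw [← hu2e] at h2
    rw [norm_sub_rev u2 u1] at h1
    have hinner : γ * ‖u1 - u2‖ ^ 2 ≤ ⟪z1 - z2, u1 - u2⟫ := by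
      have e1 : ⟪z1 - z2, u1 - u2⟫ =
          ⟪z1, u1⟫ - ⟪z1, u2⟫ - ⟪z2, u1⟫ + ⟪z2, u2⟫ := by
        rw [inner_sub_left, inner_sub_right, inner_sub_right]; ring
      rw [hG] at h1 h2
      simp only at h1 h2
      linarith [h1, h2, e1.le, e1.ge]
    have hcs : ⟪z1 - z2, u1 - u2⟫ ≤ ‖z1 - z2‖ * ‖u1 - u2‖ := real_inner_le_norm _ _
    rcases eq_or_lt_of_le (norm_nonneg (u1 - u2)) with h0 | h0
    · rw [← h0]; positivity
    · have h2' : γ * ‖u1 - u2‖ * ‖u1 - u2‖ ≤ ‖z1 - z2‖ * ‖u1 - u2‖ := by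
        nlinarith [hinner, hcs]
      have h3 : γ * ‖u1 - u2‖ ≤ ‖z1 - z2‖ := le_of_mul_le_mul_right h2' h0
      rw [one_div, ← div_eq_inv_mul, le_div_iff₀ hγ]
      linarith [h3]
  have hlip : LipschitzWith (Real.toNNReal (1 / γ)) (ustar γ) := by
    refine LipschitzWith.of_dist_le_mul fun z1 z2 => ?_
    rw [dist_eq_norm, dist_eq_norm, Real.coe_toNNReal _ (by positivity : (0:ℝ) ≤ 1/γ)]
    exact hlipR z1 z2
  refine ⟨hlip, ?_, hlip⟩
  -- gradient
  intro z
  have hφsG : ∀ z', φs γ z' = G z' (ustar γ z') := fun z' => hφs γ z'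
  set u1 := ustar γ z with hu1
  rw [hasGradientAt_iff_isLittleO]
  rw [Asymptotics.isLittleO_iff]
  intro c hc
  have hball : Metric.ball z (c * γ) ∈ nhds z := Metric.ball_mem_nhds z (by positivity)
  filter_upwards [hball] with z' hz'
  set u' := ustar γ z' with hu'
  have hlow : φs γ z + ⟪z' - z, u1⟫ ≤ φs γ z' := by
    have h := hmaxR z' u1 (humem γ hγ z) (hufin γ hγ z)
    rw [← hu'] at h
    have e : G z' u1 = G z u1 + ⟪z' - z, u1⟫ := by
      rw [hG]; simp only; rw [inner_sub_left]; ring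
    rw [hφsG z', hφsG z, ← hu1, ← hu']
    linarith [h, e.ge, e.le]
  have hup : φs γ z' ≤ φs γ z + ⟪z' - z, u'⟫ := by
    have h := hmaxR z u' (humem γ hγ z') (hufin γ hγ z')
    rw [← hu1] at h
    have e : G z' u' = G z u' + ⟪z' - z, u'⟫ := by
      rw [hG]; simp only; rw [inner_sub_left]; ring
    rw [hφsG z', hφsG z, ← hu1, ← hu', e]
    linarith
  have hdiff : ⟪z' - z, u' - u1⟫ ≤ ‖z' - z‖ * (1 / γ * ‖z' - z‖) := by
    calc ⟪z' - z, u' - u1⟫ ≤ ‖z' - z‖ * ‖u' - u1‖ := real_inner_le_norm _ _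
      _ ≤ ‖z' - z‖ * (1 / γ * ‖z' - z‖) := by
          have := hlipR z' z
          have hnn : (0:ℝ) ≤ ‖z' - z‖ := norm_nonneg _
          exact mul_le_mul_of_nonneg_left this hnn
  have habs : |φs γ z' - φs γ z - ⟪u1, z' - z⟫| ≤ 1 / γ * ‖z' - z‖ ^ 2 := by
    have hcomm : ⟪u1, z' - z⟫ = ⟪z' - z, u1⟫ := real_inner_comm _ _
    have hsplit : ⟪z' - z, u' - u1⟫ = ⟪z' - z, u'⟫ - ⟪z' - z, u1⟫ := inner_sub_right _ _ _
    have hq : (0:ℝ) ≤ 1 / γ * ‖z' - z‖ ^ 2 := by positivity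
    have hq2 : ‖z' - z‖ * (1 / γ * ‖z' - z‖) = 1 / γ * ‖z' - z‖ ^ 2 := by ring
    rw [hcomm, abs_le]
    constructor
    · linarith [hlow, hq]
    · linarith [hup, hdiff, hsplit.le, hsplit.ge, hq2.le, hq2.ge]
  have hzz : ‖z' - z‖ < c * γ := by
    rw [← dist_eq_norm]; exact mem_ball_iff_norm.mp hz' |>.trans_eq rfl
  calc ‖φs γ z' - φs γ z - ⟪u1, z' - z⟫‖ = |φs γ z' - φs γ z - ⟪u1, z' - z⟫| := rfl
    _ ≤ 1 / γ * ‖z' - z‖ ^ 2 := habs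
    _ ≤ c * ‖z' - z‖ := by
        rw [sq]
        rw [← mul_assoc]
        apply mul_le_mul_of_nonneg_right _ (norm_nonneg _)
        rw [div_mul_eq_mul_div, one_mul, div_le_iff₀ hγ]
        nlinarith [hzz]
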